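/- (Bounds of Proposition 4.1.) Fix constants C₁, C'₁ > 0, an integer q̄ ≥ 1 and T > 0. Let B be the (2q̄+1)×(2q̄+1) real matrix, indexed by q ∈ {−q̄,…,q̄}, with diagonal entries B_{q,q} = −C₁ q², entries B_{q,q+1} = B_{q+1,q} = C'₁, and all other entries zero, and define u(t,q) := (e^{(T−t)B}·𝟏)_q for t ∈ [0,T] and |q| ≤ q̄, where 𝟏 is the all-ones vector. Then for all t ∈ [0,T] and all q with |q| ≤ q̄: e^{−C₁ q̄² T} ≤ u(t,q) ≤ e^{2C'₁ T}. -/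

import Mathlib

open Matrix

section Aux

attribute [local instance] Matrix.linftyOpSemiNormedRing Matrix.linftyOpNormedRing
  Matrix.linftyOpNormedAlgebra

/-- Powers of an entrywise-nonnegative matrix with row sums `≤ c`, applied to `𝟏`. -/
lemma aux_pow_bounds {m : ℕ} (N : Matrix (Fin m) (Fin m) ℝ)
    (hN : ∀ i j, 0 ≤ N i j) (c : ℝ) (hrow : ∀ i, ∑ j, N i j ≤ c) :
    ∀ k : ℕ, ∀ i, 0 ≤ (N ^ k *ᵥ fun _ => (1:ℝ)) i ∧ (N ^ k *ᵥ fun _ => (1:ℝ)) i ≤ c ^ k := by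
  intro k
  induction k with
  | zero => intro i; simp [Matrix.one_mulVec]
  | succ k ih =>
    intro i
    have hc : 0 ≤ c := le_trans (Finset.sum_nonneg fun j _ => hN i j) (hrow i)
    rw [pow_succ', ← Matrix.mulVec_mulVec]
    have hent : (N *ᵥ (N ^ k *ᵥ fun _ => (1:ℝ))) i
        = ∑ j, N i j * (N ^ k *ᵥ fun _ => (1:ℝ)) j := rfl
    rw [hent]
    constructor
    · exact Finset.sum_nonneg fun j _ => mul_nonneg (hN i j) (ih j).1
    · calc ∑ j, N i j * (N ^ k *ᵥ fun _ => (1:ℝ)) j ≤ ∑ j, N i j * c ^ k := by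
            exact Finset.sum_le_sum fun j _ =>
              mul_le_mul_of_nonneg_left (ih j).2 (hN i j)
        _ = (∑ j, N i j) * c ^ k := by rw [Finset.sum_mul]
        _ ≤ c * c ^ k := mul_le_mul_of_nonneg_right (hrow i) (pow_nonneg hc k)
        _ = c ^ (k + 1) := (pow_succ' c k).symm

lemma aux_exp_bounds {m : ℕ} (N : Matrix (Fin m) (Fin m) ℝ)
    (hN : ∀ i j, 0 ≤ N i j) (c : ℝ) (hrow : ∀ i, ∑ j, N i j ≤ c) (i : Fin m) :
    1 ≤ (NormedSpace.exp N *ᵥ fun _ => (1:ℝ)) i ∧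
      (NormedSpace.exp N *ᵥ fun _ => (1:ℝ)) i ≤ Real.exp c := by
  have hc : 0 ≤ c := le_trans (Finset.sum_nonneg fun j _ => hN i j) (hrow i)
  set φ : Matrix (Fin m) (Fin m) ℝ →L[ℝ] ℝ :=
    LinearMap.toContinuousLinearMap
      { toFun := fun X => (X *ᵥ fun _ => (1:ℝ)) i
        map_add' := fun X Y => by simp [Matrix.add_mulVec, Pi.add_apply]
        map_smul' := fun r X => by simp [Matrix.smul_mulVec] } with hφ
  have hφ_apply : ∀ X : Matrix (Fin m) (Fin m) ℝ, φ X = (X *ᵥ fun _ => (1:ℝ)) i := fun _ => rfl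
  have hsum : Summable (fun k : ℕ => (k.factorial : ℝ)⁻¹ • N ^ k) :=
    NormedSpace.expSeries_summable' N
  have key : (NormedSpace.exp N *ᵥ fun _ => (1:ℝ)) i
      = ∑' k : ℕ, (k.factorial : ℝ)⁻¹ * (N ^ k *ᵥ fun _ => (1:ℝ)) i := by
    rw [← hφ_apply, NormedSpace.exp_eq_tsum ℝ, φ.map_tsum hsum]
    congr 1; ext k
    rw [φ.map_smul, hφ_apply]; simp
  have hsum' : Summable (fun k : ℕ => (k.factorial : ℝ)⁻¹ * (N ^ k *ᵥ fun _ => (1:ℝ)) i) := by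
    have h2 := hsum.map (φ : Matrix (Fin m) (Fin m) ℝ →ₗ[ℝ] ℝ) φ.continuous
    convert h2 using 1
    ext k
    show (k.factorial : ℝ)⁻¹ * (N ^ k *ᵥ fun _ => (1:ℝ)) i = φ ((k.factorial : ℝ)⁻¹ • N ^ k)
    rw [φ.map_smul, hφ_apply]; simp
  have hsumc : Summable (fun k : ℕ => (k.factorial : ℝ)⁻¹ * c ^ k) := by
    have := NormedSpace.expSeries_summable' (𝕂 := ℝ) c
    simpa [smul_eq_mul] using this
  constructor
  · rw [key]
    have h0 : ((Nat.factorial 0 : ℝ))⁻¹ * (N ^ 0 *ᵥ fun _ => (1:ℝ)) i = 1 := by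
      simp [Matrix.one_mulVec]
    calc (1:ℝ) = (Nat.factorial 0 : ℝ)⁻¹ * (N ^ 0 *ᵥ fun _ => (1:ℝ)) i := h0.symm
      _ ≤ _ := hsum'.le_tsum 0 fun k _ =>
          mul_nonneg (by positivity) (aux_pow_bounds N hN c hrow k i).1
  · rw [key]
    have hexp : Real.exp c = ∑' k : ℕ, (k.factorial : ℝ)⁻¹ * c ^ k := by
      rw [Real.exp_eq_exp_ℝ, NormedSpace.exp_eq_tsum ℝ]
      simp [smul_eq_mul]
    rw [hexp]
    exact Summable.tsum_le_tsum (fun k => mul_le_mul_of_nonneg_left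
      (aux_pow_bounds N hN c hrow k i).2 (by positivity)) hsum' hsumc

end Aux

section Main

attribute [local instance] Matrix.linftyOpSemiNormedRing Matrix.linftyOpNormedRing
  Matrix.linftyOpNormedAlgebra

/-- bounds of Proposition 4.1: with `B` the tridiagonal matrix with diagonal
`−C₁q²` (for `q ∈ {−q̄,…,q̄}`) and off-diagonal entries `C'₁`, the entries of
`u(t) = e^{(T−t)B}·𝟏` satisfy `e^{−C₁q̄²T} ≤ u(t,q) ≤ e^{2C'₁T}` on `[0,T]`. -/
theorem statement7 (C₁ C₁' T : ℝ) (hC₁ : 0 < C₁) (hC₁' : 0 < C₁') (hT : 0 < T)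
    (qbar : ℕ) (hqbar : 1 ≤ qbar) :
    letI B : Matrix (Fin (2 * qbar + 1)) (Fin (2 * qbar + 1)) ℝ := fun i j =>
      if i = j then -C₁ * (((i : ℕ) : ℝ) - (qbar : ℝ)) ^ 2
      else if (i : ℕ) + 1 = (j : ℕ) ∨ (j : ℕ) + 1 = (i : ℕ) then C₁' else 0
    ∀ t ∈ Set.Icc (0 : ℝ) T, ∀ i : Fin (2 * qbar + 1),
      Real.exp (-C₁ * (qbar : ℝ) ^ 2 * T)
          ≤ ((NormedSpace.exp ((T - t) • B)) *ᵥ (fun _ => 1)) i ∧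
        ((NormedSpace.exp ((T - t) • B)) *ᵥ (fun _ => 1)) i
          ≤ Real.exp (2 * C₁' * T) := by
  intro t ht i
  set B : Matrix (Fin (2 * qbar + 1)) (Fin (2 * qbar + 1)) ℝ := fun i j =>
      if i = j then -C₁ * (((i : ℕ) : ℝ) - (qbar : ℝ)) ^ 2
      else if (i : ℕ) + 1 = (j : ℕ) ∨ (j : ℕ) + 1 = (i : ℕ) then C₁' else 0 with hB
  obtain ⟨ht0, htT⟩ := ht
  set s : ℝ := T - t with hs
  have hs0 : 0 ≤ s := by simp [hs]; linarith
  have hsT : s ≤ T := by simp [hs]; linarith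
  set lam : ℝ := C₁ * (qbar : ℝ) ^ 2 with hlam
  have hlam0 : 0 ≤ lam := by positivity
  -- entrywise bounds on B
  have hBdiag : ∀ i : Fin (2 * qbar + 1), B i i = -C₁ * (((i : ℕ) : ℝ) - (qbar : ℝ)) ^ 2 := by
    intro i; simp [hB]
  have hsq : ∀ i : Fin (2 * qbar + 1), (((i : ℕ) : ℝ) - (qbar : ℝ)) ^ 2 ≤ (qbar : ℝ) ^ 2 := by
    intro i
    have h1 : (i : ℕ) < 2 * qbar + 1 := i.isLt
    have h2 : ((i : ℕ) : ℝ) ≤ 2 * (qbar : ℝ) := by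
      have : (i : ℕ) ≤ 2 * qbar := by omega
      exact_mod_cast this
    have h3 : (0:ℝ) ≤ ((i : ℕ) : ℝ) := Nat.cast_nonneg _
    nlinarith
  -- row sums of B
  have hrowB : ∀ i : Fin (2 * qbar + 1), ∑ j, B i j ≤ 2 * C₁' := by
    intro i
    set S : Finset (Fin (2 * qbar + 1)) := Finset.univ.filter
      (fun j => ¬ i = j ∧ ((i : ℕ) + 1 = (j : ℕ) ∨ (j : ℕ) + 1 = (i : ℕ))) with hS
    have step1 : ∑ j, B i j ≤ ∑ j, (if j ∈ S then C₁' else 0) := by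
      apply Finset.sum_le_sum
      intro j _
      by_cases h : i = j
      · subst h
        have : ¬ (i ∈ S) := by simp [hS]
        rw [if_neg this, hBdiag]
        nlinarith [sq_nonneg (((i : ℕ) : ℝ) - (qbar : ℝ))]
      · by_cases h2 : (i : ℕ) + 1 = (j : ℕ) ∨ (j : ℕ) + 1 = (i : ℕ)
        · have : j ∈ S := by simp [hS, h, h2]
          rw [if_pos this]
          simp [hB, h, h2]
        · have : ¬ (j ∈ S) := by simp [hS]; tauto
          rw [if_neg this]
          simp [hB, h, h2]
    have step2 : ∑ j, (if j ∈ S then C₁' else 0) = (S.card : ℝ) * C₁' := by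
      rw [Finset.sum_ite_mem, Finset.univ_inter, Finset.sum_const, nsmul_eq_mul]
    have hcard : S.card ≤ 2 := by
      have : S.card ≤ ({(i : ℕ) + 1, (i : ℕ) - 1} : Finset ℕ).card := by
        refine Finset.card_le_card_of_injOn (fun j => (j : ℕ)) ?_ ?_
        · intro j hj
          simp only [hS, Finset.mem_coe, Finset.mem_filter] at hj
          simp only [Finset.coe_insert, Finset.coe_singleton, Set.mem_insert_iff,
            Set.mem_singleton_iff, Finset.mem_insert, Finset.mem_singleton]
          omega
        · intro a _ b hb hab
          exact Fin.val_injective hab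
      calc S.card ≤ ({(i : ℕ) + 1, (i : ℕ) - 1} : Finset ℕ).card := this
        _ ≤ 2 := Finset.card_insert_le _ _ |>.trans (by simp)
    calc ∑ j, B i j ≤ (S.card : ℝ) * C₁' := step1.trans_eq step2
      _ ≤ 2 * C₁' := by
          apply mul_le_mul_of_nonneg_right _ hC₁'.le
          exact_mod_cast hcard
  -- the nonnegative matrix N
  set N : Matrix (Fin (2 * qbar + 1)) (Fin (2 * qbar + 1)) ℝ := s • B + (s * lam) • (1 : Matrix (Fin (2 * qbar + 1)) (Fin (2 * qbar + 1)) ℝ)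
    with hN
  have hNentry : ∀ i j : Fin (2 * qbar + 1), N i j = s * B i j + (s * lam) * (if i = j then 1 else 0) := by
    intro i j
    simp [hN, Matrix.one_apply, Matrix.add_apply, Matrix.smul_apply, smul_eq_mul]
  have hNpos : ∀ i j : Fin (2 * qbar + 1), 0 ≤ N i j := by
    intro i j
    rw [hNentry]
    by_cases h : i = j
    · subst h
      rw [if_pos rfl, hBdiag]
      have hx : C₁ * (((i : ℕ) : ℝ) - (qbar : ℝ)) ^ 2 ≤ lam := by
        rw [hlam]; exact mul_le_mul_of_nonneg_left (hsq i) hC₁.le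
      nlinarith [mul_nonneg hs0 (sub_nonneg.2 hx)]
    · rw [if_neg h]
      have : 0 ≤ B i j := by
        simp only [hB, if_neg h]
        split
        · exact hC₁'.le
        · exact le_refl 0
      nlinarith
  set c : ℝ := s * (lam + 2 * C₁') with hc
  have hrowN : ∀ i : Fin (2 * qbar + 1), ∑ j, N i j ≤ c := by
    intro i
    have : ∑ j, N i j = s * (∑ j, B i j) + s * lam := by
      simp only [hNentry]
      rw [Finset.sum_add_distrib, ← Finset.mul_sum]
      have h1 : ∑ x : Fin (2 * qbar + 1), (s * lam * if i = x then 1 else 0) = s * lam := by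
        simp
      rw [h1]
    rw [this, hc]
    have := mul_le_mul_of_nonneg_left (hrowB i) hs0
    nlinarith
  -- splitting the exponential
  have hsplit : (T - t) • B = N + (-(s * lam)) • (1 : Matrix (Fin (2 * qbar + 1)) (Fin (2 * qbar + 1)) ℝ) := by
    rw [hN, ← hs]
    module
  have hcomm : Commute N ((-(s * lam)) • (1 : Matrix (Fin (2 * qbar + 1)) (Fin (2 * qbar + 1)) ℝ)) :=
    (Commute.one_right N).smul_right _
  have hexp1 : NormedSpace.exp ((T - t) • B)
      = NormedSpace.exp N * NormedSpace.exp ((-(s * lam)) • (1 : Matrix (Fin (2 * qbar + 1)) (Fin (2 * qbar + 1)) ℝ)) := by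
    rw [hsplit]
    exact NormedSpace.exp_add_of_commute hcomm
  have hexp2 : NormedSpace.exp ((-(s * lam)) • (1 : Matrix (Fin (2 * qbar + 1)) (Fin (2 * qbar + 1)) ℝ))
      = Real.exp (-(s * lam)) • (1 : Matrix (Fin (2 * qbar + 1)) (Fin (2 * qbar + 1)) ℝ) := by
    have h1 : (-(s * lam)) • (1 : Matrix (Fin (2 * qbar + 1)) (Fin (2 * qbar + 1)) ℝ)
        = algebraMap ℝ (Matrix (Fin (2 * qbar + 1)) (Fin (2 * qbar + 1)) ℝ) (-(s * lam)) := by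
      rw [Algebra.algebraMap_eq_smul_one]
    rw [h1]
    erw [← NormedSpace.map_exp (algebraMap ℝ (Matrix (Fin (2 * qbar + 1)) (Fin (2 * qbar + 1)) ℝ))
      (continuous_algebraMap ℝ (Matrix (Fin (2 * qbar + 1)) (Fin (2 * qbar + 1)) ℝ))]
    rw [Algebra.algebraMap_eq_smul_one, ← Real.exp_eq_exp_ℝ]
  have hmain : ((NormedSpace.exp ((T - t) • B)) *ᵥ (fun _ => (1:ℝ))) i
      = Real.exp (-(s * lam)) * ((NormedSpace.exp N) *ᵥ (fun _ => (1:ℝ))) i := by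
    rw [hexp1, hexp2, mul_smul_comm, mul_one, Matrix.smul_mulVec]
    rfl
  obtain ⟨hlo, hhi⟩ := aux_exp_bounds N hNpos c hrowN i
  rw [hmain]
  have hepos : 0 < Real.exp (-(s * lam)) := Real.exp_pos _
  constructor
  · calc Real.exp (-C₁ * (qbar : ℝ) ^ 2 * T) ≤ Real.exp (-(s * lam)) := by
          apply Real.exp_le_exp.2
          have : s * lam ≤ lam * T := by nlinarith
          nlinarith [this]
      _ ≤ Real.exp (-(s * lam)) * ((NormedSpace.exp N) *ᵥ (fun _ => (1:ℝ))) i := by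
          nlinarith
  · calc Real.exp (-(s * lam)) * ((NormedSpace.exp N) *ᵥ (fun _ => (1:ℝ))) i
        ≤ Real.exp (-(s * lam)) * Real.exp c := by nlinarith
      _ = Real.exp (c - s * lam) := by rw [← Real.exp_add]; ring_nf
      _ ≤ Real.exp (2 * C₁' * T) := by
          apply Real.exp_le_exp.2
          rw [hc]
          nlinarith

end Main
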